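/- There are exactly 155 subloops of T_L of cardinality 8, exactly 31 subloops of cardinality 4, and exactly one subloop of cardinality 2, namely {e₀, −e₀}. -/

import Mathlib

/-- Iterated Cayley–Dickson doubling starting from `ℝ`. -/
def CD : ℕ → Type
  | 0 => ℝ
  | n + 1 => CD n × CD n

instance cdAddCommGroup : ∀ n, AddCommGroup (CD n)
  | 0 => inferInstanceAs (AddCommGroup ℝ)
  | n + 1 => letI := cdAddCommGroup n; inferInstanceAs (AddCommGroup (CD n × CD n))

noncomputable instance cdModule : ∀ n, Module ℝ (CD n)
  | 0 => inferInstanceAs (Module ℝ ℝ)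
  | n + 1 => letI := cdModule n; inferInstanceAs (Module ℝ (CD n × CD n))

/-- Cayley–Dickson conjugation, starting from the identity on `ℝ`. -/
def cdConj : ∀ n, CD n → CD n
  | 0, x => x
  | n + 1, x => (cdConj n x.1, -x.2)

/-- Cayley–Dickson multiplication: `(a,b)(c,d) = (ac − d b̄, ā d + c b)`. -/
def cdMul : ∀ n, CD n → CD n → CD n
  | 0, x, y => @Mul.mul ℝ _ x y
  | n + 1, x, y =>
      (cdMul n x.1 y.1 - cdMul n y.2 (cdConj n x.2),
       cdMul n (cdConj n x.1) y.2 + cdMul n y.1 x.2)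

instance cdMulInst (n : ℕ) : Mul (CD n) := ⟨cdMul n⟩

instance cdOne : ∀ n, One (CD n)
  | 0 => ⟨(1 : ℝ)⟩
  | n + 1 => letI := cdOne n; ⟨((1 : CD n), 0)⟩

/-- The standard basis elements: under a doubling step `A → A × A`, a basis element
`e k` of `A` gives `e k = (e k, 0)` and `e (k + dim A) = (0, e k)`. -/
def cdE : ∀ n, ℕ → CD n
  | 0, _ => (1 : ℝ)
  | n + 1, k => if k < 2 ^ n then (cdE n k, 0) else (0, cdE n (k - 2 ^ n))

/-- The trigintaduonions: the 32-dimensional real Cayley–Dickson algebra. -/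
abbrev TT := CD 5

/-- The 32 standard basis elements `e 0 = 1, e 1, …, e 31` of `𝕋`. -/
def e (i : ℕ) : TT := cdE 5 i

/-- The trigintaduonion loop `T_L = {±e 0, ±e 1, …, ±e 31}`. -/
def TL : Set TT := {x | ∃ i < 32, x = e i ∨ x = -e i}

/-- A subloop of `T_L`: a nonempty subset of `T_L` closed under multiplication. -/
def IsSubloop (N : Set TT) : Prop :=
  N ⊆ TL ∧ N.Nonempty ∧ ∀ x ∈ N, ∀ y ∈ N, x * y ∈ N

/-- Two subsets of `T_L` are isomorphic (as loops) if some bijection between them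
preserves multiplication. -/
def LoopIso (A B : Set TT) : Prop :=
  ∃ f : TT → TT, Set.BijOn f A B ∧ ∀ x ∈ A, ∀ y ∈ A, f (x * y) = f x * f y


/-! ### auxiliary development -/

lemma cdConj_neg : ∀ n (x : CD n), cdConj n (-x) = -cdConj n x
  | 0, x => rfl
  | n + 1, x => by
      show (cdConj n (-x.1), -(-x.2)) = -(cdConj n x.1, -x.2)
      rw [cdConj_neg n]; rfl

lemma cdConj_zero : ∀ n, cdConj n (0 : CD n) = 0
  | 0 => rfl
  | n + 1 => by
      show ((cdConj n 0, -(0:CD n)) : CD n × CD n) = 0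
      rw [cdConj_zero n]; simp

lemma cd_zero_mul_zero : ∀ n, (∀ x : CD n, cdMul n x 0 = 0) ∧ (∀ y : CD n, cdMul n 0 y = 0)
  | 0 => by
    have h : ∀ a : ℝ, cdMul 0 a 0 = 0 ∧ cdMul 0 (0:ℝ) a = 0 :=
      fun a => ⟨by show a * 0 = 0; ring, by show 0 * a = 0; ring⟩
    exact ⟨fun x => (h x).1, fun y => (h y).2⟩
  | n + 1 => by
      obtain ⟨h1, h2⟩ := cd_zero_mul_zero n
      constructor
      · intro x
        show ((cdMul n x.1 0 - cdMul n 0 (cdConj n x.2),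
          cdMul n (cdConj n x.1) 0 + cdMul n 0 x.2) : CD n × CD n) = 0
        rw [h1, h1, h2, h2]; simp
      · intro y
        show ((cdMul n 0 y.1 - cdMul n y.2 (cdConj n 0),
          cdMul n (cdConj n 0) y.2 + cdMul n y.1 0) : CD n × CD n) = 0
        rw [cdConj_zero n, h1, h1, h2, h2]; simp

lemma cdMul_zero (n : ℕ) (x : CD n) : cdMul n x 0 = 0 := (cd_zero_mul_zero n).1 x
lemma cdZero_mul (n : ℕ) (y : CD n) : cdMul n 0 y = 0 := (cd_zero_mul_zero n).2 y

lemma cd_mul_neg : ∀ n, (∀ x y : CD n, cdMul n (-x) y = -cdMul n x y) ∧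
    (∀ x y : CD n, cdMul n x (-y) = -cdMul n x y)
  | 0 => by
    have h : ∀ a b : ℝ, cdMul 0 (-a) b = -cdMul 0 a b ∧ cdMul 0 a (-b) = -cdMul 0 a b :=
      fun a b => ⟨by show (-a) * b = -(a*b); ring, by show a * (-b) = -(a*b); ring⟩
    exact ⟨fun x y => (h x y).1, fun x y => (h x y).2⟩
  | n + 1 => by
    obtain ⟨hl, hr⟩ := cd_mul_neg n
    constructor
    · intro x y
      show ((cdMul n (-x.1) y.1 - cdMul n y.2 (cdConj n (-x.2)),
        cdMul n (cdConj n (-x.1)) y.2 + cdMul n y.1 (-x.2)) : CD n × CD n)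
        = -(cdMul n x.1 y.1 - cdMul n y.2 (cdConj n x.2),
            cdMul n (cdConj n x.1) y.2 + cdMul n y.1 x.2)
      rw [hl, cdConj_neg n, cdConj_neg n, hr, hl, hr]
      show (_, _) = (-(_ - _), -(_ + _))
      simp only [Prod.mk.injEq]
      constructor <;> abel
    · intro x y
      show ((cdMul n x.1 (-y.1) - cdMul n (-y.2) (cdConj n x.2),
        cdMul n (cdConj n x.1) (-y.2) + cdMul n (-y.1) x.2) : CD n × CD n)
        = -(cdMul n x.1 y.1 - cdMul n y.2 (cdConj n x.2),
            cdMul n (cdConj n x.1) y.2 + cdMul n y.1 x.2)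
      rw [hr, hl, hr, hl]
      show (_, _) = (-(_ - _), -(_ + _))
      simp only [Prod.mk.injEq]
      constructor <;> abel

lemma cdMul_neg_left (n : ℕ) (x y : CD n) : cdMul n (-x) y = -cdMul n x y := (cd_mul_neg n).1 x y
lemma cdMul_neg_right (n : ℕ) (x y : CD n) : cdMul n x (-y) = -cdMul n x y := (cd_mul_neg n).2 x y

/-! ### Nat xor helpers -/

lemma bool_xor_aux (x y p : Bool) : Bool.xor (Bool.xor x p) (Bool.xor y p) = Bool.xor x y := by
  cases x <;> cases y <;> cases p <;> rfl

lemma add_pow_eq_xor {n a : ℕ} (ha : a < 2^n) : a + 2^n = a ^^^ 2^n := by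
  apply Nat.eq_of_testBit_eq
  intro k
  rcases lt_trichotomy k n with h | h | h
  · rw [Nat.add_comm, Nat.testBit_two_pow_add_gt h, Nat.testBit_xor,
      Nat.testBit_two_pow_of_ne (by omega)]
    simp
  · subst h
    rw [Nat.add_comm, Nat.testBit_two_pow_add_eq, Nat.testBit_lt_two_pow ha,
      Nat.testBit_xor, Nat.testBit_lt_two_pow ha, Nat.testBit_two_pow_self]
    rfl
  · have h1 : a + 2^n < 2^k := by
      have : 2^(n+1) ≤ 2^k := Nat.pow_le_pow_right (by norm_num) h
      have := Nat.pow_succ 2 n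
      omega
    have h2 : a < 2^k := by omega
    rw [Nat.testBit_lt_two_pow h1, Nat.testBit_xor, Nat.testBit_lt_two_pow h2,
      Nat.testBit_two_pow_of_ne (by omega)]
    rfl

lemma xor_high_low {n a b : ℕ} (ha : a < 2^n) (hb : b < 2^n) :
    (a + 2^n) ^^^ b = (a ^^^ b) + 2^n := by
  rw [add_pow_eq_xor ha, add_pow_eq_xor (Nat.xor_lt_two_pow ha hb), Nat.xor_assoc,
    Nat.xor_comm (2^n) b, ← Nat.xor_assoc]

lemma xor_low_high {n a b : ℕ} (ha : a < 2^n) (hb : b < 2^n) :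
    a ^^^ (b + 2^n) = (a ^^^ b) + 2^n := by
  rw [Nat.xor_comm, xor_high_low hb ha, Nat.xor_comm a b]

lemma xor_high_high {n a b : ℕ} (ha : a < 2^n) (hb : b < 2^n) :
    (a + 2^n) ^^^ (b + 2^n) = a ^^^ b := by
  rw [add_pow_eq_xor ha, add_pow_eq_xor hb]
  apply Nat.eq_of_testBit_eq
  intro k
  simp only [Nat.testBit_xor]
  exact bool_xor_aux _ _ _

/-! ### signed basis elements -/

def sg (n : ℕ) (b : Bool) (x : CD n) : CD n := cond b (-x) x

lemma sg_pair (n : ℕ) (b : Bool) (x y : CD n) :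
    sg (n+1) b ((x, y) : CD n × CD n) = (sg n b x, sg n b y) := by
  cases b <;> rfl

lemma sg_neg (n : ℕ) (b : Bool) (x : CD n) : sg n b (-x) = sg n (!b) x := by
  cases b <;> simp [sg]

lemma sg_sg (n : ℕ) (b c : Bool) (x : CD n) : sg n b (sg n c x) = sg n (b ^^ c) x := by
  cases b <;> cases c <;> simp [sg]

lemma cdMul_sg (n : ℕ) (b c : Bool) (x y : CD n) :
    cdMul n (sg n b x) (sg n c y) = sg n (b ^^ c) (cdMul n x y) := by
  cases b <;> cases c <;>
    simp [sg, cdMul_neg_left, cdMul_neg_right]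

lemma cdConj_sg (n : ℕ) (b : Bool) (x : CD n) :
    cdConj n (sg n b x) = sg n b (cdConj n x) := by
  cases b <;> simp [sg, cdConj_neg]

lemma cdConj_e : ∀ n, ∀ i < 2^n, cdConj n (cdE n i) = sg n (decide (i ≠ 0)) (cdE n i)
  | 0 => by
      intro i hi
      interval_cases i
      rfl
  | n + 1 => by
      intro i hi
      by_cases h : i < 2^n
      · have h0 : cdE (n+1) i = ((cdE n i, 0) : CD n × CD n) := by
          simp [cdE, h]; rfl
        rw [h0]
        show (cdConj n (cdE n i), -(0 : CD n)) = _
        rw [cdConj_e n i h, neg_zero, sg_pair]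
        congr 1
        cases hb : decide (i ≠ 0) <;> simp [sg]
      · have hne : i ≠ 0 := by
          have : 0 < 2^n := Nat.two_pow_pos n
          omega
        have h0 : cdE (n+1) i = ((0, cdE n (i - 2^n)) : CD n × CD n) := by
          simp [cdE, h]; rfl
        rw [h0]
        show (cdConj n 0, -(cdE n (i - 2^n))) = _
        rw [cdConj_zero, sg_pair]
        simp [sg, hne]

/-! ### the sign function and the multiplication rule -/

def sgn : ℕ → ℕ → ℕ → Bool
  | 0, _, _ => false
  | n+1, i, j =>
    if i < 2^n then
      if j < 2^n then sgn n i j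
      else (decide (i ≠ 0)).xor (sgn n i (j - 2^n))
    else
      if j < 2^n then sgn n j (i - 2^n)
      else !((decide (i - 2^n ≠ 0)).xor (sgn n (j - 2^n) (i - 2^n)))

lemma sg_zero (n : ℕ) (b : Bool) : sg n b (0 : CD n) = 0 := by cases b <;> simp [sg]

lemma neg_sg (n : ℕ) (b : Bool) (x : CD n) : -(sg n b x) = sg n (!b) x := by
  cases b <;> simp [sg]

lemma cdMul_sg_left (n : ℕ) (b : Bool) (x y : CD n) :
    cdMul n (sg n b x) y = sg n b (cdMul n x y) := by
  cases b <;> simp [sg, cdMul_neg_left]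

lemma cdMul_sg_right (n : ℕ) (b : Bool) (x y : CD n) :
    cdMul n x (sg n b y) = sg n b (cdMul n x y) := by
  cases b <;> simp [sg, cdMul_neg_right]

lemma cdMul_e : ∀ n, ∀ i < 2^n, ∀ j < 2^n,
    cdMul n (cdE n i) (cdE n j) = sg n (sgn n i j) (cdE n (i ^^^ j))
  | 0 => by
    intro i hi j hj
    interval_cases i
    interval_cases j
    show cdMul 0 (cdE 0 0) (cdE 0 0) = sg 0 false (cdE 0 0)
    have : ∀ a : ℝ, a = 1 → cdMul 0 a a = a := fun a ha => by
      subst ha; show (1:ℝ) * 1 = 1; ring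
    exact this _ rfl
  | n + 1 => by
    intro i hi j hj
    have hp : (0:ℕ) < 2^n := Nat.two_pow_pos n
    have hpow : 2^(n+1) = 2^n + 2^n := by rw [pow_succ]; omega
    by_cases h1 : i < 2^n <;> by_cases h2 : j < 2^n
    · -- both low
      have hij : i ^^^ j < 2^n := Nat.xor_lt_two_pow h1 h2
      rw [show cdE (n+1) i = ((cdE n i, 0) : CD n × CD n) by simp [cdE, h1]; rfl,
          show cdE (n+1) j = ((cdE n j, 0) : CD n × CD n) by simp [cdE, h2]; rfl,
          show cdE (n+1) (i ^^^ j) = ((cdE n (i ^^^ j), 0) : CD n × CD n) by simp [cdE, hij]; rfl,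
          show sgn (n+1) i j = sgn n i j by simp [sgn, h1, h2]]
      show (cdMul n (cdE n i) (cdE n j) - cdMul n 0 (cdConj n 0),
            cdMul n (cdConj n (cdE n i)) 0 + cdMul n (cdE n j) 0) = _
      simp only [cdConj_zero, cdMul_zero, cdZero_mul, sub_zero, add_zero]
      rw [cdMul_e n i h1 j h2, sg_pair, sg_zero]
    · -- i low, j high
      have hj' : j - 2^n < 2^n := by omega
      have hj2 : (j - 2^n) + 2^n = j := by omega
      have hxor : i ^^^ j = (i ^^^ (j - 2^n)) + 2^n := by
        conv_lhs => rw [← hj2]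
        rw [xor_low_high h1 hj']
      have hxl : i ^^^ (j - 2^n) < 2^n := Nat.xor_lt_two_pow h1 hj'
      rw [show cdE (n+1) i = ((cdE n i, 0) : CD n × CD n) by simp [cdE, h1]; rfl,
          show cdE (n+1) j = ((0, cdE n (j - 2^n)) : CD n × CD n) by simp [cdE, h2]; rfl,
          show cdE (n+1) (i ^^^ j) = ((0, cdE n (i ^^^ (j - 2^n))) : CD n × CD n) by
            rw [hxor]; simp [cdE]; rfl,
          show sgn (n+1) i j = Bool.xor (decide (i ≠ 0)) (sgn n i (j - 2^n)) by
            simp [sgn, h1, h2]]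
      show (cdMul n (cdE n i) 0 - cdMul n (cdE n (j - 2^n)) (cdConj n 0),
            cdMul n (cdConj n (cdE n i)) (cdE n (j - 2^n)) + cdMul n 0 0) = _
      simp only [cdConj_zero, cdMul_zero, cdZero_mul, sub_zero, add_zero]
      rw [cdConj_e n i h1, cdMul_sg_left, cdMul_e n i h1 _ hj', sg_sg, sg_pair, sg_zero]
    · -- i high, j low
      have hi' : i - 2^n < 2^n := by omega
      have hi2 : (i - 2^n) + 2^n = i := by omega
      have hxor : i ^^^ j = ((i - 2^n) ^^^ j) + 2^n := by
        conv_lhs => rw [← hi2]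
        rw [xor_high_low hi' h2]
      rw [show cdE (n+1) i = ((0, cdE n (i - 2^n)) : CD n × CD n) by simp [cdE, h1]; rfl,
          show cdE (n+1) j = ((cdE n j, 0) : CD n × CD n) by simp [cdE, h2]; rfl,
          show cdE (n+1) (i ^^^ j) = ((0, cdE n ((i - 2^n) ^^^ j)) : CD n × CD n) by
            rw [hxor]; simp [cdE]; rfl,
          show sgn (n+1) i j = sgn n j (i - 2^n) by simp [sgn, h1, h2]]
      show (cdMul n 0 (cdE n j) - cdMul n 0 (cdConj n (cdE n (i - 2^n))),
            cdMul n (cdConj n 0) 0 + cdMul n (cdE n j) (cdE n (i - 2^n))) = _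
      simp only [cdConj_zero, cdMul_zero, cdZero_mul, sub_zero, zero_add]
      rw [cdMul_e n j h2 _ hi', sg_pair, sg_zero, Nat.xor_comm j (i - 2^n)]
    · -- both high
      have hi' : i - 2^n < 2^n := by omega
      have hj' : j - 2^n < 2^n := by omega
      have hi2 : (i - 2^n) + 2^n = i := by omega
      have hj2 : (j - 2^n) + 2^n = j := by omega
      have hxor : i ^^^ j = (i - 2^n) ^^^ (j - 2^n) := by
        conv_lhs => rw [← hi2, ← hj2]
        rw [xor_high_high hi' hj']
      have hxl : (i - 2^n) ^^^ (j - 2^n) < 2^n := Nat.xor_lt_two_pow hi' hj'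
      rw [show cdE (n+1) i = ((0, cdE n (i - 2^n)) : CD n × CD n) by simp [cdE, h1]; rfl,
          show cdE (n+1) j = ((0, cdE n (j - 2^n)) : CD n × CD n) by simp [cdE, h2]; rfl,
          show cdE (n+1) (i ^^^ j) = ((cdE n ((i - 2^n) ^^^ (j - 2^n)), 0) : CD n × CD n) by
            rw [hxor]; simp [cdE, hxl]; rfl,
          show sgn (n+1) i j
              = !(Bool.xor (decide (i - 2^n ≠ 0)) (sgn n (j - 2^n) (i - 2^n))) by
            simp [sgn, h1, h2]]
      show (cdMul n 0 0 - cdMul n (cdE n (j - 2^n)) (cdConj n (cdE n (i - 2^n))),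
            cdMul n (cdConj n 0) (cdE n (j - 2^n)) + cdMul n 0 (cdE n (i - 2^n))) = _
      simp only [cdConj_zero, cdMul_zero, cdZero_mul, zero_add, add_zero]
      rw [cdConj_e n _ hi', cdMul_sg_right, cdMul_e n _ hj' _ hi', sg_sg, zero_sub, neg_sg,
          sg_pair, sg_zero, Nat.xor_comm (j - 2^n) (i - 2^n)]

/-! ### coordinates, distinctness of basis elements -/

def coordCD : ∀ n, ℕ → CD n → ℝ
  | 0, _, x => x
  | n+1, k, x => if k < 2^n then coordCD n k x.1 else coordCD n (k - 2^n) x.2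

lemma coordCD_neg : ∀ n k (x : CD n), coordCD n k (-x) = -coordCD n k x
  | 0, _, x => rfl
  | n+1, k, x => by
      conv_rhs => rw [show coordCD (n+1) k x
        = (if k < 2^n then coordCD n k x.1 else coordCD n (k - 2^n) x.2) from rfl]
      show (if k < 2^n then coordCD n k (-x.1) else coordCD n (k - 2^n) (-x.2)) = _
      split <;> rw [coordCD_neg n]

lemma coordCD_zero : ∀ n k, coordCD n k (0 : CD n) = 0
  | 0, _ => rfl
  | n+1, k => by
      show (if k < 2^n then coordCD n k (0:CD n) else coordCD n (k - 2^n) (0:CD n)) = _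
      split <;> rw [coordCD_zero n]

lemma coordCD_e : ∀ n, ∀ i < 2^n, ∀ k < 2^n,
    coordCD n k (cdE n i) = if i = k then 1 else 0
  | 0 => by intro i hi k hk; interval_cases i; interval_cases k; rfl
  | n + 1 => by
    intro i hi k hk
    by_cases h1 : i < 2^n <;> by_cases h2 : k < 2^n
    · rw [show cdE (n+1) i = ((cdE n i, 0) : CD n × CD n) by simp [cdE, h1]; rfl]
      show (if k < 2^n then coordCD n k (cdE n i) else coordCD n (k - 2^n) (0:CD n)) = _
      rw [if_pos h2, coordCD_e n i h1 k h2]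
    · rw [show cdE (n+1) i = ((cdE n i, 0) : CD n × CD n) by simp [cdE, h1]; rfl]
      show (if k < 2^n then coordCD n k (cdE n i) else coordCD n (k - 2^n) (0:CD n)) = _
      rw [if_neg h2, coordCD_zero, if_neg (by omega)]
    · rw [show cdE (n+1) i = ((0, cdE n (i - 2^n)) : CD n × CD n) by simp [cdE, h1]; rfl]
      show (if k < 2^n then coordCD n k (0:CD n) else coordCD n (k - 2^n) (cdE n (i - 2^n))) = _
      rw [if_pos h2, coordCD_zero, if_neg (by omega)]
    · rw [show cdE (n+1) i = ((0, cdE n (i - 2^n)) : CD n × CD n) by simp [cdE, h1]; rfl]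
      show (if k < 2^n then coordCD n k (0:CD n) else coordCD n (k - 2^n) (cdE n (i - 2^n))) = _
      have hi' : i - 2^n < 2^n := by
        have : 2^(n+1) = 2^n + 2^n := by rw [pow_succ]; omega
        omega
      have hk' : k - 2^n < 2^n := by
        have : 2^(n+1) = 2^n + 2^n := by rw [pow_succ]; omega
        omega
      rw [if_neg h2, coordCD_e n _ hi' _ hk']
      congr 1
      simp only [eq_iff_iff]
      omega

lemma cdE_ne_neg {n i j : ℕ} (hi : i < 2^n) (hj : j < 2^n) : cdE n i ≠ -cdE n j := by
  intro h
  have := congrArg (coordCD n i) h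
  rw [coordCD_neg, coordCD_e n i hi i hi, coordCD_e n j hj i hi, if_pos rfl] at this
  by_cases hji : j = i <;> simp [hji] at this <;> norm_num at this

lemma cdE_inj {n i j : ℕ} (hi : i < 2^n) (hj : j < 2^n) (h : cdE n i = cdE n j) : i = j := by
  by_contra hne
  have := congrArg (coordCD n i) h
  rw [coordCD_e n i hi i hi, coordCD_e n j hj i hi, if_pos rfl, if_neg (by omega)] at this
  norm_num at this


/-! ### signed basis elements of 𝕋 -/

lemma two_pow_five : (2:ℕ)^5 = 32 := by norm_num

def Es (b : Bool) (i : ℕ) : TT := sg 5 b (e i)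

lemma Es_false (i : ℕ) : Es false i = e i := rfl
lemma Es_true (i : ℕ) : Es true i = -e i := rfl

lemma Es_mul {i j : ℕ} (b c : Bool) (hi : i < 32) (hj : j < 32) :
    Es b i * Es c j = Es (Bool.xor b (Bool.xor c (sgn 5 i j))) (i ^^^ j) := by
  show cdMul 5 _ _ = _
  unfold Es e
  rw [cdMul_sg, cdMul_e 5 i (by omega) j (by omega), sg_sg]
  congr 1
  cases b <;> cases c <;> cases sgn 5 i j <;> rfl

lemma Es_inj {b c : Bool} {i j : ℕ} (hi : i < 32) (hj : j < 32)
    (h : Es b i = Es c j) : b = c ∧ i = j := by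
  have hi' : i < 2^5 := by omega
  have hj' : j < 2^5 := by omega
  cases b <;> cases c
  · exact ⟨rfl, cdE_inj hi' hj' h⟩
  · exact absurd h (cdE_ne_neg hi' hj')
  · exact absurd h.symm (cdE_ne_neg hj' hi')
  · refine ⟨rfl, cdE_inj hi' hj' ?_⟩
    have := congrArg Neg.neg h
    simpa [Es, sg, e] using h

lemma mem_TL_iff {x : TT} : x ∈ TL ↔ ∃ i : Fin 32, ∃ b, x = Es b ↑i := by
  constructor
  · rintro ⟨i, hi, h | h⟩
    · exact ⟨⟨i, hi⟩, false, h⟩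
    · exact ⟨⟨i, hi⟩, true, h⟩
  · rintro ⟨i, b, rfl⟩
    cases b
    · exact ⟨i, i.isLt, Or.inl rfl⟩
    · exact ⟨i, i.isLt, Or.inr rfl⟩

/-! ### Fin 32 xor -/

def fx (i j : Fin 32) : Fin 32 :=
  ⟨i.val ^^^ j.val, by
    have := Nat.xor_lt_two_pow (n := 5) (x := i.val) (y := j.val) (by omega) (by omega)
    omega⟩

@[simp] lemma fx_val (i j : Fin 32) : (fx i j).val = i.val ^^^ j.val := rfl

lemma fx_comm (i j : Fin 32) : fx i j = fx j i := by
  apply Fin.ext; simp [Nat.xor_comm]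

@[simp] lemma fx_self (i : Fin 32) : fx i i = 0 := by
  apply Fin.ext; simp

@[simp] lemma fx_zero_left (i : Fin 32) : fx 0 i = i := by
  apply Fin.ext; simp

@[simp] lemma fx_zero_right (i : Fin 32) : fx i 0 = i := by
  apply Fin.ext; simp

@[simp] lemma fx_cancel_left (i j : Fin 32) : fx i (fx i j) = j := by
  apply Fin.ext; simp [← Nat.xor_assoc]

@[simp] lemma fx_cancel_right (i j : Fin 32) : fx (fx i j) j = i := by
  apply Fin.ext; simp [Nat.xor_assoc]

lemma fx_eq_zero_iff {i j : Fin 32} : fx i j = 0 ↔ i = j := by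
  rw [Fin.ext_iff, Fin.ext_iff]
  simp only [fx_val, Fin.val_zero]
  constructor
  · intro h
    have := congrArg (· ^^^ j.val) h
    simpa [Nat.xor_assoc] using this
  · intro h; rw [h, Nat.xor_self]

/-! ### decidable sign facts -/

lemma sgn5_zero_left : ∀ i : Fin 32, sgn 5 0 i.val = false := by decide

lemma sgn5_self : ∀ i : Fin 32, sgn 5 i.val i.val = decide (i ≠ 0) := by decide

lemma Es_mul' (b c : Bool) (i j : Fin 32) :
    Es b ↑i * Es c ↑j = Es (Bool.xor b (Bool.xor c (sgn 5 ↑i ↑j))) ↑(fx i j) :=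
  Es_mul b c i.isLt j.isLt

/-! ### subloops attached to xor-closed sets -/

def G (S : Finset (Fin 32)) : Set TT := {x | ∃ i ∈ S, ∃ b, x = Es b ↑i}

def XC (S : Finset (Fin 32)) : Prop :=
  (0 : Fin 32) ∈ S ∧ ∀ i ∈ S, ∀ j ∈ S, fx i j ∈ S

lemma e_mem_G_iff {S : Finset (Fin 32)} {i : Fin 32} {b : Bool} :
    Es b ↑i ∈ G S ↔ i ∈ S := by
  constructor
  · rintro ⟨j, hj, c, hc⟩
    obtain ⟨-, h2⟩ := Es_inj i.isLt j.isLt hc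
    rwa [show i = j from Fin.ext h2]
  · intro h; exact ⟨i, h, b, rfl⟩

lemma G_injective : Function.Injective G := by
  intro S T h
  ext i
  constructor
  · intro hi
    exact e_mem_G_iff.mp (h ▸ (e_mem_G_iff (b := false)).mpr hi)
  · intro hi
    exact e_mem_G_iff.mp (h.symm ▸ (e_mem_G_iff (b := false)).mpr hi)

lemma isSubloop_G {S : Finset (Fin 32)} (h : XC S) : IsSubloop (G S) := by
  refine ⟨?_, ⟨Es false 0, e_mem_G_iff.mpr h.1⟩, ?_⟩
  · rintro x ⟨i, hi, b, rfl⟩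
    exact mem_TL_iff.mpr ⟨i, b, rfl⟩
  · rintro x ⟨i, hi, b, rfl⟩ y ⟨j, hj, c, rfl⟩
    rw [Es_mul' b c i j]
    exact e_mem_G_iff.mpr (h.2 i hi j hj)

lemma ncard_G (S : Finset (Fin 32)) : (G S).ncard = 2 * S.card := by
  have hG : G S = (fun i : Fin 32 => e ↑i) '' ↑S ∪ (fun i : Fin 32 => -e ↑i) '' ↑S := by
    ext x
    constructor
    · rintro ⟨i, hi, b, rfl⟩
      cases b
      · exact Or.inl ⟨i, hi, rfl⟩
      · exact Or.inr ⟨i, hi, rfl⟩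
    · rintro (⟨i, hi, rfl⟩ | ⟨i, hi, rfl⟩)
      · exact ⟨i, hi, false, rfl⟩
      · exact ⟨i, hi, true, rfl⟩
  have hinj1 : Set.InjOn (fun i : Fin 32 => e ↑i) ↑S := by
    intro a _ b _ hab
    exact Fin.ext ((Es_inj a.isLt b.isLt (b := false) (c := false) hab).2)
  have hinj2 : Set.InjOn (fun i : Fin 32 => -e ↑i) ↑S := by
    intro a _ b _ hab
    have : Es true ↑a = Es true ↑b := hab
    exact Fin.ext ((Es_inj a.isLt b.isLt this).2)
  have hdisj : Disjoint ((fun i : Fin 32 => e ↑i) '' ↑S) ((fun i : Fin 32 => -e ↑i) '' ↑S) := by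
    rw [Set.disjoint_left]
    rintro x ⟨i, hi, rfl⟩ ⟨j, hj, hx⟩
    exact cdE_ne_neg (n := 5) (by omega) (by omega) hx.symm
  rw [hG, Set.ncard_union_eq hdisj ((S.finite_toSet).image _) ((S.finite_toSet).image _),
    Set.ncard_image_of_injOn hinj1, Set.ncard_image_of_injOn hinj2, Set.ncard_coe_finset]
  omega

open Classical in
lemma subloop_classify {N : Set TT} (h : IsSubloop N) :
    N = {e 0} ∨ ∃ S : Finset (Fin 32), XC S ∧ N = G S := by
  obtain ⟨hTL, ⟨x0, hx0⟩, hcl⟩ := h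
  have hmem : ∀ x ∈ N, ∃ i : Fin 32, ∃ b, x = Es b ↑i := fun x hx => mem_TL_iff.mp (hTL hx)
  have hsq : ∀ (i : Fin 32) (b : Bool), Es b ↑i ∈ N → Es (decide (i ≠ 0)) 0 ∈ N := by
    intro i b hx
    have h2 := hcl _ hx _ hx
    rw [Es_mul' b b i i, fx_self, sgn5_self i] at h2
    have hb : Bool.xor b (Bool.xor b (decide (i ≠ 0))) = decide (i ≠ 0) := by
      cases b <;> simp
    rwa [hb, show ((0 : Fin 32) : ℕ) = 0 from rfl] at h2
  have he0 : e 0 ∈ N := by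
    obtain ⟨i, b, rfl⟩ := hmem x0 hx0
    by_cases hi : i = 0
    · subst hi
      have := hsq 0 b hx0
      simp at this
      exact this
    · have h1 := hsq i b hx0
      rw [show (decide (i ≠ 0)) = true by simp [hi]] at h1
      have h2 := hcl _ h1 _ h1
      have : Es true (0:ℕ) * Es true (0:ℕ) = Es false 0 := by
        rw [Es_mul (i := 0) (j := 0) true true (by omega) (by omega),
          show sgn 5 0 0 = false from sgn5_zero_left 0]
        rfl
      rw [this] at h2
      exact h2
  by_cases hN : N = {e 0}
  · exact Or.inl hN
  right
  have hneg : -e 0 ∈ N := by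
    have hex : ∃ x ∈ N, x ≠ e 0 := by
      by_contra h'
      push_neg at h'
      exact hN (Set.eq_singleton_iff_unique_mem.mpr ⟨he0, h'⟩)
    obtain ⟨x, hx, hxe⟩ := hex
    obtain ⟨i, b, rfl⟩ := hmem x hx
    by_cases hi : i = 0
    · subst hi
      cases b
      · exact absurd rfl hxe
      · exact hx
    · have h1 := hsq i b hx
      rw [show (decide (i ≠ 0)) = true by simp [hi]] at h1
      exact h1
  have hflip : ∀ (i : Fin 32) (b : Bool), Es b ↑i ∈ N → Es (!b) ↑i ∈ N := by
    intro i b hx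
    have h2 := hcl _ hneg _ hx
    have : (-e 0) * Es b ↑i = Es (!b) ↑i := by
      rw [show -e 0 = Es true ((0 : Fin 32) : ℕ) from rfl, Es_mul' true b 0 i,
        fx_zero_left, show ((0 : Fin 32) : ℕ) = (0:ℕ) from rfl, sgn5_zero_left i]
      congr 1
      cases b <;> rfl
    rwa [this] at h2
  refine ⟨Finset.univ.filter (fun i : Fin 32 => e ↑i ∈ N), ⟨?_, ?_⟩, ?_⟩
  · simp only [Finset.mem_filter, Finset.mem_univ, true_and]
    exact he0
  · intro i hi j hj
    simp only [Finset.mem_filter, Finset.mem_univ, true_and] at hi hj ⊢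
    have h2 := hcl _ hi _ hj
    rw [show e ↑i = Es false ↑i from rfl, show e ↑j = Es false ↑j from rfl,
      Es_mul' false false i j] at h2
    rcases hb : Bool.xor false (Bool.xor false (sgn 5 ↑i ↑j)) with _ | _
    · rw [hb] at h2; exact h2
    · rw [hb] at h2
      have := hflip _ _ h2
      exact this
  · ext x
    constructor
    · intro hx
      obtain ⟨i, b, rfl⟩ := hmem x hx
      have hei : e ↑i ∈ N := by
        cases b
        · exact hx
        · have := hflip i true hx
          exact this
      exact ⟨i, by simp [hei], b, rfl⟩
    · rintro ⟨i, hi, b, rfl⟩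
      simp only [Finset.mem_filter, Finset.mem_univ, true_and] at hi
      cases b
      · exact hi
      · exact hflip i false hi

/-! ### counting xor-closed sets -/

def P4 : Finset (Fin 32 × Fin 32) :=
  Finset.univ.filter (fun p => 0 < p.1 ∧ p.1 < p.2 ∧ p.2 < fx p.1 p.2)

def P2 : Finset (Fin 32) := Finset.univ.filter (fun i => 0 < i)

def Φ4 (p : Fin 32 × Fin 32) : Finset (Fin 32) := {0, p.1, p.2, fx p.1 p.2}

set_option maxRecDepth 40000 in
lemma P4_card : P4.card = 155 := by decide

set_option maxRecDepth 40000 in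
lemma P2_card : P2.card = 31 := by decide

lemma card4_aux {a b c : Fin 32} (h0a : (0:Fin 32) ≠ a) (h0b : (0:Fin 32) ≠ b)
    (h0c : (0:Fin 32) ≠ c) (hab : a ≠ b) (hac : a ≠ c) (hbc : b ≠ c) :
    ({0, a, b, c} : Finset (Fin 32)).card = 4 := by
  rw [Finset.card_insert_of_notMem (by simp [h0a, h0b, h0c]),
    Finset.card_insert_of_notMem (by simp [hab, hac]),
    Finset.card_insert_of_notMem (by simp [hbc]), Finset.card_singleton]

lemma XC_of_gen (i j : Fin 32) : XC ({0, i, j, fx i j} : Finset (Fin 32)) := by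
  refine ⟨by simp, ?_⟩
  intro a ha b hb
  simp only [Finset.mem_insert, Finset.mem_singleton] at ha hb
  rcases ha with rfl | rfl | rfl | rfl <;> rcases hb with rfl | rfl | rfl | rfl <;>
    simp only [fx_self, fx_zero_left, fx_zero_right, fx_cancel_left, fx_cancel_right,
      Finset.mem_insert, Finset.mem_singleton] <;>
    first
      | tauto
      | (rw [fx_comm]
         simp only [fx_self, fx_zero_left, fx_zero_right, fx_cancel_left, fx_cancel_right]
         tauto)

lemma mem_P4_iff {p : Fin 32 × Fin 32} :
    p ∈ P4 ↔ 0 < p.1 ∧ p.1 < p.2 ∧ p.2 < fx p.1 p.2 := by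
  simp [P4]

lemma XC_Phi4 {p : Fin 32 × Fin 32} (hp : p ∈ P4) : XC (Φ4 p) ∧ (Φ4 p).card = 4 := by
  obtain ⟨h1, h2, h3⟩ := mem_P4_iff.mp hp
  refine ⟨XC_of_gen p.1 p.2, card4_aux ?_ ?_ ?_ ?_ ?_ ?_⟩
  · exact ne_of_lt h1
  · exact ne_of_lt (h1.trans h2)
  · exact ne_of_lt ((h1.trans h2).trans h3)
  · exact ne_of_lt h2
  · exact ne_of_lt (h2.trans h3)
  · exact ne_of_lt h3

set_option maxHeartbeats 2000000 in
lemma S4_eq : {S : Finset (Fin 32) | XC S ∧ S.card = 4} = Φ4 '' ↑P4 := by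
  ext S
  constructor
  · rintro ⟨⟨h0, hcl⟩, hcard⟩
    have h3 : 1 < (S.erase 0).card := by
      rw [Finset.card_erase_of_mem h0, hcard]
      norm_num
    obtain ⟨a, ha, b, hb, hab⟩ := Finset.one_lt_card.mp h3
    have ha0 : a ≠ 0 := (Finset.mem_erase.mp ha).1
    have haS : a ∈ S := (Finset.mem_erase.mp ha).2
    have hb0 : b ≠ 0 := (Finset.mem_erase.mp hb).1
    have hbS : b ∈ S := (Finset.mem_erase.mp hb).2
    set c := fx a b with hc
    have hcS : c ∈ S := hcl a haS b hbS
    have hc0 : c ≠ 0 := fun h => hab (fx_eq_zero_iff.mp h)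
    have hca : c ≠ a := by
      intro h
      apply hb0
      have h2 := congrArg (fx a) h
      rwa [hc, fx_cancel_left, fx_self] at h2
    have hcb : c ≠ b := by
      intro h
      apply ha0
      have h2 := congrArg (fun x => fx x b) h
      simp only [hc, fx_cancel_right, fx_self] at h2
      exact h2
    have hTsub : ({0, a, b, c} : Finset (Fin 32)) ⊆ S := by
      intro x hx
      simp only [Finset.mem_insert, Finset.mem_singleton] at hx
      rcases hx with rfl | rfl | rfl | rfl
      exacts [h0, haS, hbS, hcS]
    have hTcard : ({0, a, b, c} : Finset (Fin 32)).card = 4 :=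
      card4_aux (Ne.symm ha0) (Ne.symm hb0) (Ne.symm hc0) hab (Ne.symm hca) (Ne.symm hcb)
    have hST : ({0, a, b, c} : Finset (Fin 32)) = S :=
      Finset.eq_of_subset_of_card_le hTsub (by rw [hcard, hTcard])
    have permEq : ∀ x y : Fin 32, ({0, x, y, fx x y} : Finset (Fin 32)) = {0, a, b, c} →
        Φ4 (x, y) = S := by
      intro x y hxy
      rw [show Φ4 (x, y) = {0, x, y, fx x y} from rfl, hxy, hST]
    rcases lt_trichotomy a b with h1 | h1 | h1
    · rcases lt_trichotomy b c with h2 | h2 | h2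
      · -- a < b < c : (a, b)
        refine ⟨(a, b), Finset.mem_coe.mpr (mem_P4_iff.mpr ⟨Fin.pos_of_ne_zero ha0, h1, by rw [← hc]; exact h2⟩), ?_⟩
        exact permEq a b rfl
      · exact absurd h2 hcb.symm
      · rcases lt_trichotomy a c with h4 | h4 | h4
        · -- a < c < b : (a, c);  fx a c = b
          have hfx : fx a c = b := by rw [hc, fx_cancel_left]
          refine ⟨(a, c), Finset.mem_coe.mpr (mem_P4_iff.mpr ⟨Fin.pos_of_ne_zero ha0, h4, by rw [hfx]; exact h2⟩), ?_⟩
          refine permEq a c ?_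
          rw [hfx]
          ext x
          simp only [Finset.mem_insert, Finset.mem_singleton]
          tauto
        · exact absurd h4.symm hca
        · -- c < a < b : (c, a);  fx c a = b
          have hfx : fx c a = b := by rw [hc, fx_comm, fx_cancel_left]
          refine ⟨(c, a), Finset.mem_coe.mpr (mem_P4_iff.mpr ⟨Fin.pos_of_ne_zero hc0, h4, by rw [hfx]; exact h1⟩), ?_⟩
          refine permEq c a ?_
          rw [hfx]
          ext x
          simp only [Finset.mem_insert, Finset.mem_singleton]
          tauto
    · exact absurd h1 hab
    · rcases lt_trichotomy a c with h2 | h2 | h2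
      · -- b < a < c : (b, a);  fx b a = c
        have hfx : fx b a = c := by rw [hc, fx_comm]
        refine ⟨(b, a), Finset.mem_coe.mpr (mem_P4_iff.mpr ⟨Fin.pos_of_ne_zero hb0, h1, by rw [hfx]; exact h2⟩), ?_⟩
        refine permEq b a ?_
        rw [hfx]
        ext x
        simp only [Finset.mem_insert, Finset.mem_singleton]
        tauto
      · exact absurd h2.symm hca
      · rcases lt_trichotomy b c with h4 | h4 | h4
        · -- b < c < a : (b, c);  fx b c = a
          have hfx : fx b c = a := by rw [hc, fx_comm a b, fx_cancel_left]
          refine ⟨(b, c), Finset.mem_coe.mpr (mem_P4_iff.mpr ⟨Fin.pos_of_ne_zero hb0, h4, by rw [hfx]; exact h2⟩), ?_⟩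
          refine permEq b c ?_
          rw [hfx]
          ext x
          simp only [Finset.mem_insert, Finset.mem_singleton]
          tauto
        · exact absurd h4 hcb.symm
        · -- c < b < a : (c, b);  fx c b = a
          have hfx : fx c b = a := by rw [hc, fx_cancel_right]
          refine ⟨(c, b), Finset.mem_coe.mpr (mem_P4_iff.mpr ⟨Fin.pos_of_ne_zero hc0, h4, by rw [hfx]; exact h1⟩), ?_⟩
          refine permEq c b ?_
          rw [hfx]
          ext x
          simp only [Finset.mem_insert, Finset.mem_singleton]
          tauto
  · rintro ⟨p, hp, rfl⟩
    exact XC_Phi4 hp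

lemma Φ4_injOn : Set.InjOn Φ4 ↑P4 := by
  rintro ⟨i, j⟩ hp ⟨i', j'⟩ hq h
  obtain ⟨h1, h2, h3⟩ := mem_P4_iff.mp (Finset.mem_coe.mp hp)
  obtain ⟨h1', h2', h3'⟩ := mem_P4_iff.mp (Finset.mem_coe.mp hq)
  simp only [Φ4] at h
  have hmm := Finset.ext_iff.mp h
  have mi : i = 0 ∨ i = i' ∨ i = j' ∨ i = fx i' j' := by
    have := (hmm i).mp (by simp)
    simpa using this
  have mj : j = 0 ∨ j = i' ∨ j = j' ∨ j = fx i' j' := by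
    have := (hmm j).mp (by simp)
    simpa using this
  have mi' : i' = 0 ∨ i' = i ∨ i' = j ∨ i' = fx i j := by
    have := (hmm i').mpr (by simp)
    simpa using this
  have mj' : j' = 0 ∨ j' = i ∨ j' = j ∨ j' = fx i j := by
    have := (hmm j').mpr (by simp)
    simpa using this
  simp only [Fin.lt_def, Fin.ext_iff, Fin.val_zero] at mi mj mi' mj' h1 h2 h3 h1' h2' h3' ⊢
  simp only [Prod.mk.injEq, Fin.ext_iff]
  constructor <;> omega

lemma classify_card (k : ℕ) (hk : 1 ≤ k) :
    {N : Set TT | IsSubloop N ∧ N.ncard = 2 * k} = G '' {S | XC S ∧ S.card = k} := by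
  ext N
  constructor
  · rintro ⟨hsub, hcard⟩
    rcases subloop_classify hsub with rfl | ⟨S, hXC, rfl⟩
    · rw [Set.ncard_singleton] at hcard
      omega
    · rw [ncard_G] at hcard
      exact ⟨S, ⟨hXC, by omega⟩, rfl⟩
  · rintro ⟨S, ⟨hXC, hcard⟩, rfl⟩
    exact ⟨isSubloop_G hXC, by rw [ncard_G, hcard]⟩

lemma S2_eq : {S : Finset (Fin 32) | XC S ∧ S.card = 2}
    = (fun i : Fin 32 => ({0, i} : Finset (Fin 32))) '' ↑P2 := by
  ext S
  constructor
  · rintro ⟨⟨h0, hcl⟩, hcard⟩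
    obtain ⟨x, y, hxy, rfl⟩ := Finset.card_eq_two.mp hcard
    simp only [Finset.mem_insert, Finset.mem_singleton] at h0
    rcases h0 with rfl | rfl
    · refine ⟨y, Finset.mem_coe.mpr (by simp [P2, Fin.pos_of_ne_zero (Ne.symm hxy)]), rfl⟩
    · refine ⟨x, Finset.mem_coe.mpr (by simp [P2, Fin.pos_of_ne_zero hxy]), ?_⟩
      ext z
      simp only [Finset.mem_insert, Finset.mem_singleton]
      tauto
  · rintro ⟨i, hi, rfl⟩
    have hi0 : i ≠ 0 := by
      have := Finset.mem_coe.mp hi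
      simp only [P2, Finset.mem_filter, Finset.mem_univ, true_and] at this
      exact (ne_of_lt this).symm
    refine ⟨⟨by simp, ?_⟩, ?_⟩
    · intro a ha b hb
      simp only [Finset.mem_insert, Finset.mem_singleton] at ha hb
      rcases ha with rfl | rfl <;> rcases hb with rfl | rfl <;> simp
    · rw [Finset.card_insert_of_notMem (by simp [Ne.symm hi0]), Finset.card_singleton]

lemma Φ2_injOn : Set.InjOn (fun i : Fin 32 => ({0, i} : Finset (Fin 32))) ↑P2 := by
  intro a ha b hb h
  have ha0 : a ≠ 0 := by
    have := Finset.mem_coe.mp ha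
    simp only [P2, Finset.mem_filter, Finset.mem_univ, true_and] at this
    exact (ne_of_lt this).symm
  have h' : ({0, a} : Finset (Fin 32)) = {0, b} := h
  have : a ∈ ({0, b} : Finset (Fin 32)) := h' ▸ (by simp : a ∈ ({0, a} : Finset (Fin 32)))
  simp only [Finset.mem_insert, Finset.mem_singleton] at this
  tauto

lemma S1_eq : {S : Finset (Fin 32) | XC S ∧ S.card = 1} = {{0}} := by
  ext S
  constructor
  · rintro ⟨⟨h0, hcl⟩, hcard⟩
    obtain ⟨x, rfl⟩ := Finset.card_eq_one.mp hcard
    simp only [Finset.mem_singleton] at h0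
    subst h0
    rfl
  · rintro rfl
    exact ⟨⟨by simp, by intro a ha b hb; simp_all⟩, by simp⟩

lemma G_zero : G {0} = {e 0, -e 0} := by
  ext x
  constructor
  · rintro ⟨i, hi, b, rfl⟩
    simp only [Finset.mem_singleton] at hi
    subst hi
    cases b
    · exact Or.inl rfl
    · exact Or.inr rfl
  · rintro (rfl | rfl)
    · exact ⟨0, by simp, false, rfl⟩
    · exact ⟨0, by simp, true, rfl⟩


/-- There are exactly 155 subloops of `T_L` of cardinality 8, exactly 31 of
cardinality 4, and exactly one of cardinality 2, namely `{e 0, -e 0}`. -/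

theorem stmt4 :
    {N : Set TT | IsSubloop N ∧ N.ncard = 8}.ncard = 155 ∧
    {N : Set TT | IsSubloop N ∧ N.ncard = 4}.ncard = 31 ∧
    {N : Set TT | IsSubloop N ∧ N.ncard = 2} = {{e 0, -e 0}} := by
  refine ⟨?_, ?_, ?_⟩
  · have h := classify_card 4 (by norm_num)
    rw [show (2*4 : ℕ) = 8 by norm_num] at h
    rw [h, Set.ncard_image_of_injective _ G_injective, S4_eq,
      Set.ncard_image_of_injOn Φ4_injOn, Set.ncard_coe_finset, P4_card]
  · have h := classify_card 2 (by norm_num)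
    rw [show (2*2 : ℕ) = 4 by norm_num] at h
    rw [h, Set.ncard_image_of_injective _ G_injective, S2_eq,
      Set.ncard_image_of_injOn Φ2_injOn, Set.ncard_coe_finset, P2_card]
  · have h := classify_card 1 (by norm_num)
    rw [show (2*1 : ℕ) = 2 by norm_num] at h
    rw [h, S1_eq, Set.image_singleton, G_zero]
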